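/- Let X be a barrelled locally convex topological vector space over ℝ and let (T_t)_{t≥0} be a strongly continuous semigroup of continuous linear operators on X. Then T is locally equicontinuous: for every t₀ > 0 the family of operators {T_s : 0 ≤ s ≤ t₀} is equicontinuous. -/

import Mathlib

open Filter Topology Set

/-- On a barrelled locally convex space, every strongly continuous
semigroup is locally equicontinuous: for every `t₀ > 0`, the family
`{T_s : 0 ≤ s ≤ t₀}` is equicontinuous. -/
theorem stmt0 {X : Type*} [AddCommGroup X] [Module ℝ X] [UniformSpace X]
    [IsUniformAddGroup X] [ContinuousSMul ℝ X] [LocallyConvexSpace ℝ X]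
    [BarrelledSpace ℝ X]
    (T : ℝ → X →L[ℝ] X)
    (hT0 : T 0 = ContinuousLinearMap.id ℝ X)
    (hTadd : ∀ s t : ℝ, 0 ≤ s → 0 ≤ t → T (s + t) = (T s).comp (T t))
    (horbit : ∀ x : X, ContinuousOn (fun t : ℝ => T t x) (Set.Ici 0))
    (t₀ : ℝ) (ht₀ : 0 < t₀) :
    Equicontinuous (fun s : Set.Icc (0 : ℝ) t₀ => (T s : X → X)) := by
  have hq : WithSeminorms (gaugeSeminormFamily ℝ X) := with_gaugeSeminormFamily
  have := hq.banach_steinhaus (𝓕 := fun s : Set.Icc (0 : ℝ) t₀ => T s) ?_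
  · exact this.equicontinuous
  · intro k x
    have hcont : ContinuousOn (fun t : ℝ => gaugeSeminormFamily ℝ X k (T t x))
        (Set.Icc 0 t₀) :=
      ((hq.continuous_seminorm k).comp_continuousOn
        ((horbit x).mono (Set.Icc_subset_Ici_self)))
    have hcomp : IsCompact ((fun t : ℝ => gaugeSeminormFamily ℝ X k (T t x)) ''
        Set.Icc 0 t₀) := (isCompact_Icc).image_of_continuousOn hcont
    rcases hcomp.bddAbove with ⟨M, hM⟩
    refine ⟨M, ?_⟩
    rintro _ ⟨s, rfl⟩
    exact hM ⟨s, s.2, rfl⟩
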